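/- (Claim 6, first part) Let k ≥ 2 and n ≥ 3 be integers, let 1 ≤ r ≤ n−2, and let A ⊆ [k]^n be a compressed set with B_{≥r+1} ⊆ A ⊆ B_{≥r} such that D = A ∩ B_r is nonempty. Let s = max{m(x) : x ∈ D}, where m(x) = max(x_1,…,x_n). Then d([s]^n ∩ B_r) ⊆ d(A), where [s]^n = {0,…,s−1}^n. -/

import Mathlib

open Finset
open scoped Classical

/-- `R_i(x)`: the set of coordinates of `x` equal to `i`.
The ambient alphabet is `[k+1] = {0,…,k}`. -/
noncomputable def rset {k N : ℕ} (x : Fin N → Fin (k + 1)) (i : ℕ) : Finset (Fin N) :=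
  Finset.univ.filter fun j => (x j : ℕ) = i

/-- the strict binary order on finite sets of coordinates:
`X <_bin Y` iff `X ≠ Y` and `max (X Δ Y) ∈ Y`. -/
def binLT {N : ℕ} (X Y : Finset (Fin N)) : Prop :=
  ∃ m ∈ Y, m ∉ X ∧ ∀ j : Fin N, ((j ∈ X ∧ j ∉ Y) ∨ (j ∈ Y ∧ j ∉ X)) → j ≤ m

/-- the strict `≤`-order on `[k+1]^N`: `x < y` iff `|R_0(x)| > |R_0(y)|`, or
`|R_0(x)| = |R_0(y)|` and for the largest `i` with `R_i(x) ≠ R_i(y)` we have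
`max (R_i(x) Δ R_i(y)) ∈ R_i(y)`. -/
def plt {k N : ℕ} (x y : Fin N → Fin (k + 1)) : Prop :=
  (rset y 0).card < (rset x 0).card ∨
    ((rset x 0).card = (rset y 0).card ∧
      ∃ i : ℕ, binLT (rset x i) (rset y i) ∧ ∀ j : ℕ, i < j → rset x j = rset y j)

/-- the `≤`-order on `[k+1]^N`. -/
def ple {k N : ℕ} (x y : Fin N → Fin (k + 1)) : Prop := x = y ∨ plt x y

/-- `B` is an initial segment of the `≤`-order. -/
def isInitSeg {k N : ℕ} (B : Finset (Fin N → Fin (k + 1))) : Prop :=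
  ∀ y ∈ B, ∀ x, ple x y → x ∈ B

/-- the `d`-shadow: all points obtained from a point of `A` by flipping one
nonzero coordinate to `0`. -/
noncomputable def dShadow {k N : ℕ} (A : Finset (Fin N → Fin (k + 1))) :
    Finset (Fin N → Fin (k + 1)) :=
  A.biUnion fun x =>
    (Finset.univ.filter fun i => x i ≠ 0).image fun i => Function.update x i 0

/-- the initial segment of the `≤`-order on `[k+1]^N` of cardinality `m`. -/
noncomputable def initSeg (k N m : ℕ) : Finset (Fin N → Fin (k + 1)) :=
  Finset.univ.filter fun x => (Finset.univ.filter fun y => ple y x).card ≤ m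

/-- the `C_s`-compression of `A ⊆ [k+1]^(n+1)`: replace each slice
`A_{s,t} = {y : t_s y ∈ A}` by the initial segment of the same size. -/
noncomputable def compress {k n : ℕ} (s : Fin (n + 1)) (A : Finset (Fin (n + 1) → Fin (k + 1))) :
    Finset (Fin (n + 1) → Fin (k + 1)) :=
  Finset.univ.biUnion fun t : Fin (k + 1) =>
    (initSeg k n
        (Finset.univ.filter fun y : Fin n → Fin (k + 1) => s.insertNth t y ∈ A).card).image
      fun y => s.insertNth t y

/-- `A` is compressed if every `C_s`-compression fixes it. -/
def IsCompressed {k n : ℕ} (A : Finset (Fin (n + 1) → Fin (k + 1))) : Prop :=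
  ∀ s : Fin (n + 1), compress s A = A

/-- `B_r`: points with exactly `r` zero coordinates. -/
noncomputable def Bexact (k N r : ℕ) : Finset (Fin N → Fin (k + 1)) :=
  Finset.univ.filter fun x => (rset x 0).card = r

/-- `B_{≥r}`: points with at least `r` zero coordinates. -/
noncomputable def Bge (k N r : ℕ) : Finset (Fin N → Fin (k + 1)) :=
  Finset.univ.filter fun x => r ≤ (rset x 0).card

/-- `m(x)`: the largest coordinate value of `x`. -/
noncomputable def mval {k N : ℕ} (x : Fin N → Fin (k + 1)) : ℕ :=
  Finset.univ.sup fun i => (x i : ℕ)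

/-- the class `C_X`: points with maximal coordinate `s`, attained exactly on `X`,
and exactly `r` zero coordinates. -/
noncomputable def classSet (k N s r : ℕ) (X : Finset (Fin N)) : Finset (Fin N → Fin (k + 1)) :=
  Finset.univ.filter fun x => mval x = s ∧ rset x s = X ∧ (rset x 0).card = r

/-- `[m]^N = {0,…,m−1}^N`. -/
noncomputable def box (k N m : ℕ) : Finset (Fin N → Fin (k + 1)) :=
  Finset.univ.filter fun x => ∀ i, (x i : ℕ) < m

/-- `{1,…,s−1}^N`. -/
noncomputable def box1 (k N s : ℕ) : Finset (Fin N → Fin (k + 1)) :=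
  Finset.univ.filter fun x => ∀ i, 1 ≤ (x i : ℕ) ∧ (x i : ℕ) ≤ s - 1

/-- `B` is a down-set. -/
def isDownSet {k N : ℕ} (B : Finset (Fin N → Fin (k + 1))) : Prop :=
  ∀ y ∈ B, ∀ x : Fin N → Fin (k + 1), (∀ j, (x j : ℕ) ≤ (y j : ℕ)) → x ∈ B


-- ===== auxiliary machinery =====

-- generic digit lemmas
lemma sum_digits_lt (B : ℕ) (hB : 0 < B) (d : ℕ → ℕ) (hd : ∀ j, d j < B) (m : ℕ) :
    ∑ j ∈ Finset.range m, d j * B^j < B^m := by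
  induction m with
  | zero => simp
  | succ m ih =>
    rw [Finset.sum_range_succ, pow_succ]
    have h1 : d m + 1 ≤ B := hd m
    calc ∑ j ∈ Finset.range m, d j * B^j + d m * B^m
        < B^m + d m * B^m := by omega
      _ = (d m + 1) * B^m := by ring
      _ ≤ B * B^m := Nat.mul_le_mul_right _ h1
      _ = B^m * B := by ring

lemma digits_lt_of (B : ℕ) (hB : 0 < B) (d e : ℕ → ℕ) (hd : ∀ j, d j < B) (m i : ℕ)
    (him : i < m) (hi : d i < e i) (habove : ∀ j, i < j → j < m → d j = e j) :
    ∑ j ∈ Finset.range m, d j * B^j < ∑ j ∈ Finset.range m, e j * B^j := by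
  rw [Finset.range_eq_Ico, ← Finset.sum_Ico_consecutive _ (Nat.zero_le (i+1)) him,
    ← Finset.sum_Ico_consecutive _ (Nat.zero_le (i+1)) him]
  have heq : ∑ j ∈ Finset.Ico (i+1) m, d j * B^j = ∑ j ∈ Finset.Ico (i+1) m, e j * B^j := by
    apply Finset.sum_congr rfl
    intro j hj
    rw [Finset.mem_Ico] at hj
    rw [habove j hj.1 hj.2]
  rw [heq]
  apply Nat.add_lt_add_right
  rw [← Finset.range_eq_Ico] at *
  rw [Finset.sum_range_succ, Finset.sum_range_succ]
  calc ∑ j ∈ Finset.range i, d j * B^j + d i * B^i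
      < B^i + d i * B^i := by
        have := sum_digits_lt B hB d hd i; omega
    _ = (d i + 1) * B^i := by ring
    _ ≤ e i * B^i := Nat.mul_le_mul_right _ hi
    _ ≤ _ := Nat.le_add_left _ _

lemma digits_lt_iff (B : ℕ) (hB : 0 < B) (d e : ℕ → ℕ) (hd : ∀ j, d j < B) (he : ∀ j, e j < B)
    (m : ℕ) :
    (∑ j ∈ Finset.range m, d j * B^j < ∑ j ∈ Finset.range m, e j * B^j) ↔
      ∃ i, i < m ∧ d i < e i ∧ ∀ j, i < j → j < m → d j = e j := by
  constructor
  · intro h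
    set T := (Finset.range m).filter (fun j => d j ≠ e j) with hT
    rcases T.eq_empty_or_nonempty with hE | hNE
    · exfalso
      have : ∑ j ∈ Finset.range m, d j * B^j = ∑ j ∈ Finset.range m, e j * B^j := by
        apply Finset.sum_congr rfl
        intro j hj
        by_contra hne
        have : j ∈ T := by
          rw [hT, Finset.mem_filter]
          refine ⟨hj, ?_⟩
          intro hdje; rw [hdje] at hne; exact hne rfl
        rw [hE] at this; exact absurd this (Finset.notMem_empty j)
      omega
    · set i := T.max' hNE with hi
      have hiT : i ∈ T := T.max'_mem hNE
      rw [hT, Finset.mem_filter, Finset.mem_range] at hiT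
      have habove : ∀ j, i < j → j < m → d j = e j := by
        intro j hij hjm
        by_contra hne
        have : j ∈ T := by rw [hT, Finset.mem_filter, Finset.mem_range]; exact ⟨hjm, hne⟩
        have := T.le_max' j this
        omega
      refine ⟨i, hiT.1, ?_, habove⟩
      rcases Nat.lt_trichotomy (d i) (e i) with h1 | h1 | h1
      · exact h1
      · exact absurd h1 hiT.2
      · exfalso
        have := digits_lt_of B hB e d he m i hiT.1 h1 (fun j a b => (habove j a b).symm)
        omega
  · rintro ⟨i, h1, h2, h3⟩
    exact digits_lt_of B hB d e hd m i h1 h2 h3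

lemma digits_eq_of (B : ℕ) (hB : 0 < B) (d e : ℕ → ℕ) (hd : ∀ j, d j < B) (he : ∀ j, e j < B)
    (m : ℕ) (h : ∑ j ∈ Finset.range m, d j * B^j = ∑ j ∈ Finset.range m, e j * B^j) :
    ∀ j, j < m → d j = e j := by
  intro j hjm
  by_contra hne
  set T := (Finset.range m).filter (fun j => d j ≠ e j) with hT
  have hNE : T.Nonempty := ⟨j, by rw [hT, Finset.mem_filter, Finset.mem_range]; exact ⟨hjm, hne⟩⟩
  set i := T.max' hNE with hi
  have hiT : i ∈ T := T.max'_mem hNE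
  rw [hT, Finset.mem_filter, Finset.mem_range] at hiT
  have habove : ∀ j, i < j → j < m → d j = e j := by
    intro j hij hjm
    by_contra hne
    have : j ∈ T := by rw [hT, Finset.mem_filter, Finset.mem_range]; exact ⟨hjm, hne⟩
    have := T.le_max' j this
    omega
  rcases Nat.lt_trichotomy (d i) (e i) with h1 | h1 | h1
  · have := digits_lt_of B hB d e hd m i hiT.1 h1 habove; omega
  · exact hiT.2 h1
  · have := digits_lt_of B hB e d he m i hiT.1 h1 (fun j a b => (habove j a b).symm); omega

noncomputable def nuF {N : ℕ} (S : Finset (Fin N)) : ℕ := ∑ j ∈ S, 2^(j:ℕ)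

lemma card_filter_val_lt (N m : ℕ) (hm : m ≤ N) :
    ((Finset.univ : Finset (Fin N)).filter (fun j : Fin N => (j:ℕ) < m)).card = m := by
  induction m with
  | zero => simp
  | succ m ih =>
    have hm' : m ≤ N := by omega
    have : ((Finset.univ : Finset (Fin N)).filter (fun j : Fin N => (j:ℕ) < m + 1))
        = insert (⟨m, by omega⟩ : Fin N) ((Finset.univ : Finset (Fin N)).filter (fun j : Fin N => (j:ℕ) < m)) := by
      ext j
      simp only [Finset.mem_filter, Finset.mem_insert, Finset.mem_univ, true_and]
      constructor
      · intro h
        rcases Nat.lt_or_ge (j:ℕ) m with h2 | h2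
        · exact Or.inr h2
        · left; apply Fin.ext; simp; omega
      · rintro (h | h)
        · rw [h]; simp
        · omega
    rw [this, Finset.card_insert_of_notMem (by simp), ih hm']

lemma card_filter_val_ge (N m : ℕ) (hm : m ≤ N) :
    ((Finset.univ : Finset (Fin N)).filter (fun j : Fin N => m ≤ (j:ℕ))).card = N - m := by
  have h1 : ((Finset.univ : Finset (Fin N)).filter (fun j : Fin N => m ≤ (j:ℕ)))
      = (Finset.univ : Finset (Fin N)) \ ((Finset.univ : Finset (Fin N)).filter (fun j : Fin N => (j:ℕ) < m)) := by
    ext j; simp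
  rw [h1, Finset.card_sdiff_of_subset (Finset.filter_subset _ _), card_filter_val_lt N m hm]
  simp

lemma nuF_lt_pow {N : ℕ} (S : Finset (Fin N)) (m : ℕ) (hS : ∀ j ∈ S, (j:ℕ) < m) :
    nuF S < 2^m := by
  induction m using Nat.strong_induction_on generalizing S with
  | _ m ih =>
    rcases S.eq_empty_or_nonempty with rfl | hNE
    · simp only [nuF, Finset.sum_empty]; positivity
    · set M := S.max' hNE with hM
      have hMS : M ∈ S := S.max'_mem hNE
      have hMm : (M:ℕ) < m := hS M hMS
      have hrec : nuF (S.erase M) < 2^(M:ℕ) := by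
        apply ih (M:ℕ) hMm
        intro j hj
        rw [Finset.mem_erase] at hj
        have h1 : (j:ℕ) ≤ (M:ℕ) := S.le_max' j hj.2
        have hne : j ≠ M := hj.1
        rcases Nat.lt_or_ge (j:ℕ) (M:ℕ) with h | h
        · exact h
        · exact absurd (Fin.ext (by omega : (j:ℕ) = (M:ℕ))) hne
      have hsum : nuF S = 2^(M:ℕ) + nuF (S.erase M) := by
        rw [nuF, nuF, ← Finset.add_sum_erase _ _ hMS]
      rw [hsum]
      calc 2^(M:ℕ) + nuF (S.erase M) < 2^(M:ℕ) + 2^(M:ℕ) := by omega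
        _ = 2^((M:ℕ)+1) := by ring
        _ ≤ 2^m := Nat.pow_le_pow_right (by norm_num) hMm

lemma nuF_lt_pow' {N : ℕ} (S : Finset (Fin N)) : nuF S < 2^N :=
  nuF_lt_pow S N (fun j _ => j.isLt)

lemma pow_card_le_nuF {N : ℕ} (S : Finset (Fin N)) : 2^S.card ≤ nuF S + 1 := by
  suffices H : ∀ c : ℕ, ∀ S : Finset (Fin N), S.card = c → 2^S.card ≤ nuF S + 1 by
    exact H S.card S rfl
  intro c
  induction c using Nat.strong_induction_on with
  | _ c ih =>
    intro S hc
    rcases S.eq_empty_or_nonempty with rfl | hNE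
    · simp [nuF]
    · set M := S.max' hNE with hM
      have hMS : M ∈ S := S.max'_mem hNE
      have hcard : S.card ≤ (M:ℕ) + 1 := by
        have hsub : S ⊆ (Finset.univ : Finset (Fin N)).filter (fun j : Fin N => (j:ℕ) < (M:ℕ)+1) := by
          intro j hj
          simp only [Finset.mem_filter, Finset.mem_univ, true_and]
          have := S.le_max' j hj
          omega
        have := Finset.card_le_card hsub
        rwa [card_filter_val_lt N ((M:ℕ)+1) (by omega)] at this
      have h3 : 0 < S.card := Finset.card_pos.2 hNE
      have hec : (S.erase M).card = S.card - 1 := Finset.card_erase_of_mem hMS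
      have hrec : 2^(S.erase M).card ≤ nuF (S.erase M) + 1 := by
        apply ih (S.erase M).card (by omega) _ rfl
      have hsum : nuF S = 2^(M:ℕ) + nuF (S.erase M) := by
        rw [nuF, nuF, ← Finset.add_sum_erase _ _ hMS]
      have h2 : 2^(S.card - 1) ≤ 2^(M:ℕ) := Nat.pow_le_pow_right (by norm_num) (by omega)
      calc 2^S.card = 2^(S.card - 1) + 2^(S.card-1) := by
            rw [← two_mul, ← pow_succ']
            congr 1
            omega
        _ ≤ 2^(M:ℕ) + (nuF (S.erase M) + 1) := by
            rw [hec] at hrec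
            omega
        _ = nuF S + 1 := by rw [hsum]; omega

lemma nuF_lt_of_binLT {N : ℕ} {S T : Finset (Fin N)} (h : binLT S T) : nuF S < nuF T := by
  obtain ⟨m, hmT, hmS, hb⟩ := h
  have h1 : nuF S = nuF (S ∩ T) + nuF (S \ T) := (Finset.sum_inter_add_sum_sdiff S T _).symm
  have h2 : nuF T = nuF (T ∩ S) + nuF (T \ S) := (Finset.sum_inter_add_sum_sdiff T S _).symm
  have h3 : nuF (S \ T) < 2^(m:ℕ) := by
    apply nuF_lt_pow
    intro j hj
    rw [Finset.mem_sdiff] at hj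
    have hle : j ≤ m := hb j (Or.inl hj)
    have hne : j ≠ m := by rintro rfl; exact hmS hj.1
    have : (j:ℕ) ≤ (m:ℕ) := hle
    rcases Nat.lt_or_ge (j:ℕ) (m:ℕ) with h | h
    · exact h
    · exact absurd (Fin.ext (by omega : (j:ℕ) = (m:ℕ))) hne
  have h4 : 2^(m:ℕ) ≤ nuF (T \ S) := by
    apply Finset.single_le_sum (f := fun j : Fin N => 2^(j:ℕ)) (fun _ _ => Nat.zero_le _)
    rw [Finset.mem_sdiff]; exact ⟨hmT, hmS⟩
  have h5 : nuF (S ∩ T) = nuF (T ∩ S) := by rw [Finset.inter_comm]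
  omega

lemma binLT_of_nuF_lt {N : ℕ} {S T : Finset (Fin N)} (h : nuF S < nuF T) : binLT S T := by
  have hne : S ≠ T := by rintro rfl; omega
  set D := (S \ T) ∪ (T \ S) with hD
  have hDne : D.Nonempty := by
    rcases Finset.nonempty_iff_ne_empty.2 (show D ≠ ∅ by
      intro hE
      apply hne
      rw [hD, Finset.union_eq_empty, Finset.sdiff_eq_empty_iff_subset,
        Finset.sdiff_eq_empty_iff_subset] at hE
      exact Finset.Subset.antisymm hE.1 hE.2) with ⟨x, hx⟩
    exact ⟨x, hx⟩
  set M := D.max' hDne with hM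
  have hMD : M ∈ D := D.max'_mem hDne
  have hbound : ∀ j : Fin N, ((j ∈ S ∧ j ∉ T) ∨ (j ∈ T ∧ j ∉ S)) → j ≤ M := by
    intro j hj
    apply D.le_max'
    rw [hD, Finset.mem_union, Finset.mem_sdiff, Finset.mem_sdiff]
    tauto
  rw [hD, Finset.mem_union, Finset.mem_sdiff, Finset.mem_sdiff] at hMD
  rcases hMD with hMD | hMD
  · exfalso
    have : binLT T S := ⟨M, hMD.1, hMD.2, fun j hj => hbound j (by tauto)⟩
    have := nuF_lt_of_binLT this
    omega
  · exact ⟨M, hMD.1, hMD.2, hbound⟩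

lemma nuF_inj {N : ℕ} {S T : Finset (Fin N)} (h : nuF S = nuF T) : S = T := by
  by_contra hne
  rcases Nat.lt_trichotomy (nuF S) (nuF T) with h1 | h1 | h1
  · omega
  · -- equal: derive contradiction from hne directly
    set D := (S \ T) ∪ (T \ S) with hD
    have hDne : D.Nonempty := by
      rcases Finset.nonempty_iff_ne_empty.2 (show D ≠ ∅ by
        intro hE
        apply hne
        rw [hD, Finset.union_eq_empty, Finset.sdiff_eq_empty_iff_subset,
          Finset.sdiff_eq_empty_iff_subset] at hE
        exact Finset.Subset.antisymm hE.1 hE.2) with ⟨x, hx⟩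
      exact ⟨x, hx⟩
    set M := D.max' hDne with hM
    have hMD : M ∈ D := D.max'_mem hDne
    have hbound : ∀ j : Fin N, ((j ∈ S ∧ j ∉ T) ∨ (j ∈ T ∧ j ∉ S)) → j ≤ M := by
      intro j hj
      apply D.le_max'
      rw [hD, Finset.mem_union, Finset.mem_sdiff, Finset.mem_sdiff]
      tauto
    rw [hD, Finset.mem_union, Finset.mem_sdiff, Finset.mem_sdiff] at hMD
    rcases hMD with hMD | hMD
    · have : binLT T S := ⟨M, hMD.1, hMD.2, fun j hj => hbound j (by tauto)⟩
      have := nuF_lt_of_binLT this; omega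
    · have : binLT S T := ⟨M, hMD.1, hMD.2, hbound⟩
      have := nuF_lt_of_binLT this; omega
  · omega

section FF
variable {k N : ℕ}

lemma val_le_k (x : Fin N → Fin (k+1)) (j : Fin N) : (x j : ℕ) ≤ k :=
  Nat.lt_succ_iff.mp (x j).isLt

lemma mem_rset {x : Fin N → Fin (k+1)} {v : ℕ} {j : Fin N} :
    j ∈ rset x v ↔ (x j : ℕ) = v := by simp [rset]

lemma rset_hi (x : Fin N → Fin (k+1)) {v : ℕ} (hv : k < v) : rset x v = ∅ := by
  ext j; simp only [mem_rset, Finset.notMem_empty, iff_false]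
  have := val_le_k x j; omega

lemma rset_empty_of_lt (x : Fin N → Fin (k+1)) {v : ℕ} (h : ∀ j, (x j : ℕ) < v) :
    ∀ w, v ≤ w → rset x w = ∅ := by
  intro w hw
  ext j; simp only [mem_rset, Finset.notMem_empty, iff_false]
  have := h j; omega

lemma rset_card_le (x : Fin N → Fin (k+1)) (v : ℕ) : (rset x v).card ≤ N := by
  have := Finset.card_le_univ (rset x v)
  simpa using this

lemma rset_zero_eq_of_pos_eq {x y : Fin N → Fin (k+1)}
    (h : ∀ v : ℕ, 1 ≤ v → rset x v = rset y v) : rset x 0 = rset y 0 := by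
  ext j
  simp only [mem_rset]
  constructor
  · intro hx
    by_contra hy
    have h1 : 1 ≤ (y j : ℕ) := by omega
    have : j ∈ rset y (y j : ℕ) := mem_rset.2 rfl
    rw [← h _ h1] at this
    rw [mem_rset] at this
    omega
  · intro hy
    by_contra hx
    have h1 : 1 ≤ (x j : ℕ) := by omega
    have : j ∈ rset x (x j : ℕ) := mem_rset.2 rfl
    rw [h _ h1] at this
    rw [mem_rset] at this
    omega

lemma eq_of_rset_pos_eq {x y : Fin N → Fin (k+1)}
    (h : ∀ v : ℕ, 1 ≤ v → rset x v = rset y v) : x = y := by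
  funext j
  apply Fin.ext
  rcases Nat.eq_zero_or_pos (x j : ℕ) with h0 | h0
  · rcases Nat.eq_zero_or_pos (y j : ℕ) with h1 | h1
    · omega
    · have : j ∈ rset y (y j : ℕ) := mem_rset.2 rfl
      rw [← h _ h1] at this
      rw [mem_rset] at this
      omega
  · have : j ∈ rset x (x j : ℕ) := mem_rset.2 rfl
    rw [h _ h0] at this
    rw [mem_rset] at this
    omega

noncomputable def DigF (k : ℕ) {N : ℕ} (x : Fin N → Fin (k+1)) (j : ℕ) : ℕ :=
  if j = 0 then 0 else if j ≤ k then nuF (rset x j) else N - (rset x 0).card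

noncomputable def FF (k : ℕ) {N : ℕ} (x : Fin N → Fin (k+1)) : ℕ :=
  ∑ j ∈ Finset.range (k+2), DigF k x j * (2^N)^j

lemma DigF_lt (x : Fin N → Fin (k+1)) (j : ℕ) : DigF k x j < 2^N := by
  unfold DigF
  split
  · positivity
  · split
    · exact nuF_lt_pow' _
    · calc N - (rset x 0).card ≤ N := Nat.sub_le _ _
        _ < 2^N := Nat.lt_two_pow_self

lemma plt_iff_FF_lt {x y : Fin N → Fin (k+1)} : plt x y ↔ FF k x < FF k y := by
  have hB : (0:ℕ) < 2^N := by positivity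
  have hdx := DigF_lt (k := k) (N := N) x
  have hdy := DigF_lt (k := k) (N := N) y
  have hcx := rset_card_le x 0
  have hcy := rset_card_le y 0
  constructor
  · intro h
    rcases h with h | ⟨hc, i, hbin, habove⟩
    · apply digits_lt_of _ hB _ _ hdx _ (k+1) (by omega)
      · unfold DigF
        simp only [if_neg (by omega : ¬ (k+1 = 0)), if_neg (by omega : ¬ (k+1 ≤ k))]
        omega
      · intro j h1 h2; omega
    · -- establish 1 ≤ i ≤ k
      have hik : i ≤ k := by
        by_contra hik
        have h1 : rset x i = ∅ := rset_hi x (by omega)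
        have h2 : rset y i = ∅ := rset_hi y (by omega)
        obtain ⟨m, hm, -⟩ := hbin
        rw [h2] at hm
        exact absurd hm (Finset.notMem_empty m)
      have hi1 : 1 ≤ i := by
        rcases Nat.eq_zero_or_pos i with rfl | h1
        · exfalso
          have h0 : rset x 0 = rset y 0 :=
            rset_zero_eq_of_pos_eq (fun v hv => habove v hv)
          obtain ⟨m, hm, hm2, -⟩ := hbin
          rw [← h0] at hm
          exact hm2 hm
        · exact h1
      apply digits_lt_of _ hB _ _ hdx _ i (by omega)
      · unfold DigF
        simp only [if_neg (by omega : ¬ (i = 0)), if_pos hik]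
        exact nuF_lt_of_binLT hbin
      · intro j h1 h2
        unfold DigF
        rcases Nat.eq_zero_or_pos j with rfl | hj0
        · rfl
        · rcases le_or_gt j k with hjk | hjk
          · simp only [if_neg (by omega : ¬ (j = 0)), if_pos hjk]
            rw [habove j h1]
          · simp only [if_neg (by omega : ¬ (j = 0)), if_neg (by omega : ¬ (j ≤ k))]
            omega
  · intro h
    obtain ⟨i, him, hdig, habove⟩ := (digits_lt_iff _ hB _ _ hdx hdy _).1 h
    rcases Nat.eq_zero_or_pos i with rfl | hi0
    · exfalso; unfold DigF at hdig; simp at hdig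
    rcases le_or_gt i k with hik | hik
    · -- middle digit
      have hzeq : (rset x 0).card = (rset y 0).card := by
        have := habove (k+1) (by omega) (by omega)
        unfold DigF at this
        simp only [if_neg (by omega : ¬ (k+1 = 0)), if_neg (by omega : ¬ (k+1 ≤ k))] at this
        omega
      right
      refine ⟨hzeq, i, ?_, ?_⟩
      · apply binLT_of_nuF_lt
        unfold DigF at hdig
        simpa only [if_neg (by omega : ¬ (i = 0)), if_pos hik] using hdig
      · intro j hij
        rcases le_or_gt j k with hjk | hjk
        · have := habove j hij (by omega)
          unfold DigF at this
          simp only [if_neg (by omega : ¬ (j = 0)), if_pos hjk] at this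
          exact nuF_inj this
        · rw [rset_hi x hjk, rset_hi y hjk]
    · -- top digit
      have : i = k + 1 := by omega
      subst this
      left
      unfold DigF at hdig
      simp only [if_neg (by omega : ¬ (k+1 = 0)), if_neg (by omega : ¬ (k+1 ≤ k))] at hdig
      omega

lemma FF_inj {x y : Fin N → Fin (k+1)} (h : FF k x = FF k y) : x = y := by
  have hB : (0:ℕ) < 2^N := by positivity
  have hdig := digits_eq_of _ hB _ _ (DigF_lt (k := k) x) (DigF_lt (k := k) y) _ h
  apply eq_of_rset_pos_eq
  intro v hv
  rcases le_or_gt v k with hvk | hvk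
  · have := hdig v (by omega)
    unfold DigF at this
    simp only [if_neg (by omega : ¬ (v = 0)), if_pos hvk] at this
    exact nuF_inj this
  · rw [rset_hi x hvk, rset_hi y hvk]

lemma ple_iff_FF_le {x y : Fin N → Fin (k+1)} : ple x y ↔ FF k x ≤ FF k y := by
  constructor
  · rintro (rfl | h)
    · exact le_refl _
    · exact le_of_lt (plt_iff_FF_lt.1 h)
  · intro h
    rcases Nat.lt_or_ge (FF k x) (FF k y) with h1 | h1
    · exact Or.inr (plt_iff_FF_lt.2 h1)
    · exact Or.inl (FF_inj (by omega))

end FF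

section Main
variable {k N : ℕ}

-- downward closure of initial segments
lemma mem_initSeg_of_ple {m : ℕ} {x y : Fin N → Fin (k+1)}
    (hy : y ∈ initSeg k N m) (h : ple x y) : x ∈ initSeg k N m := by
  unfold initSeg at *
  rw [Finset.mem_filter] at *
  refine ⟨Finset.mem_univ _, le_trans (Finset.card_le_card ?_) hy.2⟩
  intro w hw
  rw [Finset.mem_filter] at *
  refine ⟨Finset.mem_univ _, ?_⟩
  rw [ple_iff_FF_le] at *
  exact le_trans hw.2 h

-- the compression workhorse
lemma mem_of_compressed {n : ℕ} {A : Finset (Fin (n + 1) → Fin (k + 1))}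
    (hA : IsCompressed A) {P Y : Fin (n+1) → Fin (k+1)} (hP : P ∈ A) (c : Fin (n+1))
    (hYc : Y c = P c) (hle : ple (Fin.removeNth c Y) (Fin.removeNth c P)) : Y ∈ A := by
  have hAc := hA c
  rw [← hAc] at hP ⊢
  unfold compress at hP ⊢
  rw [Finset.mem_biUnion] at hP
  obtain ⟨t, -, hP⟩ := hP
  rw [Finset.mem_image] at hP
  obtain ⟨z, hz, hzP⟩ := hP
  have ht : P c = t := by rw [← hzP, Fin.insertNth_apply_same]
  have hzz : z = Fin.removeNth c P := by rw [← hzP, Fin.removeNth_insertNth]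
  rw [Finset.mem_biUnion]
  refine ⟨Y c, Finset.mem_univ _, ?_⟩
  rw [Finset.mem_image]
  refine ⟨Fin.removeNth c Y, ?_, Fin.insertNth_self_removeNth c Y⟩
  rw [hYc, ht]
  exact mem_initSeg_of_ple (hzz ▸ hz) hle

-- value of succAbove
lemma succAbove_val {n : ℕ} (c : Fin (n+1)) (j : Fin n) :
    ((c.succAbove j : Fin (n+1)) : ℕ) = if (j:ℕ) < (c:ℕ) then (j:ℕ) else (j:ℕ)+1 := by
  rcases lt_or_ge ((j:ℕ)) ((c:ℕ)) with h | h
  · rw [if_pos h, Fin.succAbove_of_castSucc_lt _ _ (by rw [Fin.lt_def]; simpa)]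
    simp
  · rw [if_neg (not_lt.2 h), Fin.succAbove_of_le_castSucc _ _ (by rw [Fin.le_def]; simpa)]
    simp

lemma removeNth_apply {n : ℕ} (c : Fin (n+1)) (Y : Fin (n+1) → Fin (k+1)) (j : Fin n) :
    Fin.removeNth c Y j = Y (c.succAbove j) := rfl

-- card of rset of removeNth
lemma rset_removeNth_card {n : ℕ} (c : Fin (n+1)) (P : Fin (n+1) → Fin (k+1)) (v : ℕ) :
    (rset (Fin.removeNth c P) v).card = ((rset P v).erase c).card := by
  have himg : Finset.image c.succAbove (rset (Fin.removeNth c P) v) = (rset P v).erase c := by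
    ext j'
    rw [Finset.mem_image]
    constructor
    · rintro ⟨j, hj, rfl⟩
      rw [mem_rset] at hj
      rw [Finset.mem_erase, mem_rset]
      exact ⟨Fin.succAbove_ne c j, hj⟩
    · intro hj'
      rw [Finset.mem_erase, mem_rset] at hj'
      obtain ⟨j, rfl⟩ := Fin.exists_succAbove_eq hj'.1
      exact ⟨j, mem_rset.2 hj'.2, rfl⟩
  rw [← himg, Finset.card_image_of_injective _ (Fin.succAbove_right_injective)]

lemma rset_removeNth_card_of_ne {n : ℕ} (c : Fin (n+1)) (P : Fin (n+1) → Fin (k+1)) (v : ℕ)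
    (h : (P c : ℕ) ≠ v) : (rset (Fin.removeNth c P) v).card = (rset P v).card := by
  rw [rset_removeNth_card, Finset.erase_eq_of_notMem (by rw [mem_rset]; exact h)]

lemma rset_removeNth_card_of_eq {n : ℕ} (c : Fin (n+1)) (P : Fin (n+1) → Fin (k+1)) (v : ℕ)
    (h : (P c : ℕ) = v) : (rset (Fin.removeNth c P) v).card = (rset P v).card - 1 := by
  rw [rset_removeNth_card, Finset.card_erase_of_mem (mem_rset.2 h)]

-- comparison lemma C1
lemma plt_of_no_high {x y : Fin N → Fin (k+1)} (s : ℕ)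
    (hcard : (rset x 0).card = (rset y 0).card)
    (hx : ∀ v, s ≤ v → rset x v = ∅)
    (hy : (rset y s).Nonempty)
    (hyhi : ∀ v, s < v → rset y v = ∅) : plt x y := by
  right
  refine ⟨hcard, s, ?_, fun v hv => by rw [hx v (le_of_lt hv), hyhi v hv]⟩
  refine ⟨(rset y s).max' hy, (rset y s).max'_mem hy, ?_, ?_⟩
  · rw [hx s le_rfl]; exact Finset.notMem_empty _
  · intro j hj
    rcases hj with hj | hj
    · rw [hx s le_rfl] at hj; exact absurd hj.1 (Finset.notMem_empty j)
    · exact (rset y s).le_max' j hj.1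

-- comparison lemma C2
lemma plt_of_single_lt {x y : Fin N → Fin (k+1)} (s : ℕ) (a b : Fin N) (hab : a < b)
    (hcard : (rset x 0).card = (rset y 0).card)
    (hxs : rset x s = {a}) (hys : rset y s = {b})
    (hxhi : ∀ v, s < v → rset x v = ∅)
    (hyhi : ∀ v, s < v → rset y v = ∅) : plt x y := by
  right
  refine ⟨hcard, s, ?_, fun v hv => by rw [hxhi v hv, hyhi v hv]⟩
  refine ⟨b, by rw [hys]; exact Finset.mem_singleton_self b, ?_, ?_⟩
  · rw [hxs, Finset.mem_singleton]
    intro h; rw [h] at hab; exact lt_irrefl a hab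
  · intro j hj
    rcases hj with hj | hj
    · rw [hxs, Finset.mem_singleton] at hj; rw [hj.1]; exact le_of_lt hab
    · rw [hys, Finset.mem_singleton] at hj; rw [hj.1]

end Main

section Mu
variable {k N : ℕ}

lemma FF_decomp (x : Fin N → Fin (k+1)) :
    FF k x = (∑ j ∈ Finset.Icc 1 k, nuF (rset x j) * (2^N)^j)
      + (N - (rset x 0).card) * (2^N)^(k+1) := by
  unfold FF
  rw [Finset.sum_range_succ]
  congr 1
  · have hins : Finset.range (k+1) = insert 0 (Finset.Icc 1 k) := by
      ext j; simp [Finset.mem_range, Finset.mem_Icc]; omega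
    rw [hins, Finset.sum_insert (by simp)]
    have h0 : DigF k x 0 * (2^N)^0 = 0 := by unfold DigF; simp
    rw [h0, zero_add]
    apply Finset.sum_congr rfl
    intro j hj
    rw [Finset.mem_Icc] at hj
    unfold DigF
    rw [if_neg (by omega), if_pos hj.2]
  · unfold DigF
    rw [if_neg (by omega), if_neg (by omega)]

noncomputable def muF (k N t : ℕ) : Fin N → Fin (k+1) :=
  fun j => if (j:ℕ) < t then ⟨1 % (k+1), Nat.mod_lt 1 (Nat.succ_pos k)⟩ else 0

lemma nuF_partition (z : Fin N → Fin (k+1)) :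
    ∑ v ∈ Finset.Icc 1 k, nuF (rset z v)
      = nuF ((Finset.univ : Finset (Fin N)).filter (fun j : Fin N => (z j : ℕ) ≠ 0)) := by
  have hbi : (Finset.Icc 1 k).biUnion (fun v => rset z v)
      = (Finset.univ : Finset (Fin N)).filter (fun j : Fin N => (z j : ℕ) ≠ 0) := by
    ext j
    simp only [Finset.mem_biUnion, Finset.mem_Icc, Finset.mem_filter, Finset.mem_univ, true_and]
    constructor
    · rintro ⟨v, hv, hj⟩
      rw [mem_rset] at hj
      omega
    · intro h
      refine ⟨(z j : ℕ), ⟨by omega, Nat.lt_succ_iff.mp (z j).isLt⟩, mem_rset.2 rfl⟩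
  rw [← hbi, nuF, Finset.sum_biUnion]
  · rfl
  · intro v hv w hw hvw
    simp only [Finset.coe_Icc, Set.mem_Icc] at hv hw
    apply Finset.disjoint_left.2
    intro j hjv hjw
    rw [mem_rset] at hjv hjw
    exact hvw (by omega)

lemma muF_zero_card (hk : 1 ≤ k) (t : ℕ) (ht : t ≤ N) :
    (rset (muF k N t) 0).card = N - t := by
  have hone : (⟨1 % (k+1), Nat.mod_lt 1 (Nat.succ_pos k)⟩ : Fin (k+1)) = ⟨1, by omega⟩ := by
    apply Fin.ext
    simp only [Fin.val_mk]
    exact Nat.mod_eq_of_lt (by omega)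
  have hset : rset (muF k N t) 0 = (Finset.univ : Finset (Fin N)).filter (fun j : Fin N => t ≤ (j:ℕ)) := by
    ext j
    simp only [mem_rset, Finset.mem_filter, Finset.mem_univ, true_and, muF]
    split
    · rw [hone]; simp; omega
    · simp; omega
  rw [hset, card_filter_val_ge N t ht]

lemma mu_min (hk : 1 ≤ k) (t : ℕ) (ht : t ≤ N) (z : Fin N → Fin (k+1))
    (hz : (rset z 0).card = N - t) : ple (muF k N t) z := by
  rw [ple_iff_FF_le (k := k)]
  rw [FF_decomp, FF_decomp]
  have hone : (⟨1 % (k+1), Nat.mod_lt 1 (Nat.succ_pos k)⟩ : Fin (k+1)) = ⟨1, by omega⟩ := by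
    apply Fin.ext
    simp only [Fin.val_mk]
    exact Nat.mod_eq_of_lt (by omega)
  -- rsets of mu
  have hmu1 : rset (muF k N t) 1 = (Finset.univ : Finset (Fin N)).filter (fun j : Fin N => (j:ℕ) < t) := by
    ext j
    simp only [mem_rset, Finset.mem_filter, Finset.mem_univ, true_and, muF]
    split
    · rw [hone]; simp only [Fin.val_mk]; simpa using ‹_›
    · simp only [Fin.val_zero]; omega
  have hmuv : ∀ v, 2 ≤ v → rset (muF k N t) v = ∅ := by
    intro v hv
    ext j
    simp only [mem_rset, Finset.notMem_empty, iff_false, muF]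
    split
    · rw [hone]; simp; omega
    · simp; omega
  have hmu0 : (rset (muF k N t) 0).card = N - t := muF_zero_card hk t ht
  rw [hmu0, hz]
  apply Nat.add_le_add_right
  -- mu sum is a single term
  have hsum_mu : ∑ j ∈ Finset.Icc 1 k, nuF (rset (muF k N t) j) * (2^N)^j
      = nuF (rset (muF k N t) 1) * (2^N)^1 := by
    apply Finset.sum_eq_single 1
    · intro v hv hne
      rw [Finset.mem_Icc] at hv
      rw [hmuv v (by omega), nuF]
      simp
    · intro h
      exfalso; apply h; rw [Finset.mem_Icc]; omega
  rw [hsum_mu]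
  -- bound nuF(R1 mu)
  have hmu_bound : nuF (rset (muF k N t) 1) ≤ 2^t - 1 := by
    have := nuF_lt_pow (rset (muF k N t) 1) t (by
      intro j hj
      rw [hmu1, Finset.mem_filter] at hj
      exact hj.2)
    omega
  -- lower bound for z's sum
  have hsupp : ((Finset.univ : Finset (Fin N)).filter (fun j : Fin N => (z j : ℕ) ≠ 0)).card = t := by
    have hcompl : ((Finset.univ : Finset (Fin N)).filter (fun j : Fin N => (z j : ℕ) ≠ 0))
        = Finset.univ \ rset z 0 := by
      ext j
      simp only [Finset.mem_filter, Finset.mem_univ, true_and, Finset.mem_sdiff, mem_rset]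
    rw [hcompl, Finset.card_sdiff_of_subset (Finset.subset_univ _), hz]
    simp
    omega
  have hz_lower : 2^t - 1 ≤ ∑ v ∈ Finset.Icc 1 k, nuF (rset z v) := by
    rw [nuF_partition]
    have := pow_card_le_nuF ((Finset.univ : Finset (Fin N)).filter (fun j : Fin N => (z j : ℕ) ≠ 0))
    rw [hsupp] at this
    omega
  calc nuF (rset (muF k N t) 1) * (2^N)^1
      ≤ (∑ v ∈ Finset.Icc 1 k, nuF (rset z v)) * (2^N)^1 := by
        apply Nat.mul_le_mul_right
        omega
    _ = ∑ v ∈ Finset.Icc 1 k, nuF (rset z v) * (2^N)^1 := by rw [Finset.sum_mul]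
    _ ≤ ∑ v ∈ Finset.Icc 1 k, nuF (rset z v) * (2^N)^v := by
        apply Finset.sum_le_sum
        intro v hv
        rw [Finset.mem_Icc] at hv
        apply Nat.mul_le_mul_left
        apply Nat.pow_le_pow_right (by positivity) hv.1
end Mu

lemma rset_eq_singleton {k N : ℕ} {x : Fin N → Fin (k+1)} {v : ℕ} {a : Fin N}
    (ha : (x a : ℕ) = v) (huniq : ∀ j, (x j : ℕ) = v → j = a) : rset x v = {a} := by
  ext j
  rw [mem_rset, Finset.mem_singleton]
  exact ⟨fun h => huniq j h, fun h => h ▸ ha⟩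

lemma rset_update_ne_zero {k N : ℕ} (w : Fin N → Fin (k+1)) (c : Fin N) (a : Fin (k+1))
    (ha : (a : ℕ) ≠ 0) : rset (Function.update w c a) 0 = (rset w 0).erase c := by
  ext j
  rw [mem_rset, Finset.mem_erase, mem_rset, Function.update_apply]
  by_cases h : j = c
  · simp [h, ha]
  · simp [h]


/-- **Claim 6, first part.** Let `k ≥ 2`, `n ≥ 3`, `1 ≤ r ≤ n − 2`, and let
`A ⊆ [k]^n` be compressed with `B_{≥ r+1} ⊆ A ⊆ B_{≥ r}` and `D = A ∩ B_r` nonempty.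
If `s = max {m(x) : x ∈ D}` then `d([s]^n ∩ B_r) ⊆ d(A)`.
(Dimension `n ≥ 3` is rendered as `n + 1` with `n ≥ 2`, so `r + 1 ≤ n`;
alphabet `[k]` with `k ≥ 2` as `Fin (k+1)` with `k ≥ 1`.) -/
theorem claim6_first (k n r s : ℕ) (hk : 1 ≤ k) (hn : 2 ≤ n) (hr1 : 1 ≤ r) (hr2 : r + 1 ≤ n)
    (A : Finset (Fin (n + 1) → Fin (k + 1))) (hA : IsCompressed A)
    (hlow : Bge k (n + 1) (r + 1) ⊆ A) (hhigh : A ⊆ Bge k (n + 1) r)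
    (hD : (A ∩ Bexact k (n + 1) r).Nonempty)
    (hs1 : ∃ x ∈ A ∩ Bexact k (n + 1) r, mval x = s)
    (hs2 : ∀ x ∈ A ∩ Bexact k (n + 1) r, mval x ≤ s) :
    dShadow (box k (n + 1) s ∩ Bexact k (n + 1) r) ⊆ dShadow A := by
  intro w hw
  unfold dShadow at hw
  rw [Finset.mem_biUnion] at hw
  obtain ⟨x, hx, hw2⟩ := hw
  rw [Finset.mem_image] at hw2
  obtain ⟨i, hi, hwx⟩ := hw2
  rw [Finset.mem_filter] at hi
  have hxi : x i ≠ 0 := hi.2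
  rw [Finset.mem_inter] at hx
  have hbox : ∀ j, (x j : ℕ) < s := by
    have h := hx.1; unfold _root_.box at h; rw [Finset.mem_filter] at h; exact h.2
  have hbr : (rset x 0).card = r := by
    have h := hx.2; unfold Bexact at h; rw [Finset.mem_filter] at h; exact h.2
  have hxi1 : 1 ≤ (x i : ℕ) := by
    rcases Nat.eq_zero_or_pos (x i : ℕ) with h0 | h0
    · exact absurd (Fin.ext (by simpa using h0)) hxi
    · exact h0
  have hs2' : 2 ≤ s := by have := hbox i; omega
  obtain ⟨xs, hxsmem, hxsm⟩ := hs1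
  rw [Finset.mem_inter] at hxsmem
  have hxsA : xs ∈ A := hxsmem.1
  have hxsr : (rset xs 0).card = r := by
    have h := hxsmem.2; unfold Bexact at h; rw [Finset.mem_filter] at h; exact h.2
  have hsk : s ≤ k := by
    rw [← hxsm]; unfold mval
    exact Finset.sup_le (fun j _ => val_le_k xs j)
  obtain ⟨jst, -, hjst⟩ := Finset.exists_mem_eq_sup (Finset.univ : Finset (Fin (n+1)))
    Finset.univ_nonempty (fun j => (xs j : ℕ))
  have hjs : (xs jst : ℕ) = s := by rw [← hxsm]; unfold mval; exact hjst.symm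
  -- abbreviations
  set t := n - r with htdef
  have ht1 : 1 ≤ t := by omega
  obtain ⟨sF, hsFv⟩ : ∃ a : Fin (k+1), (a : ℕ) = s := ⟨⟨s, by omega⟩, rfl⟩
  obtain ⟨oneF, honeFv⟩ : ∃ a : Fin (k+1), (a : ℕ) = 1 := ⟨⟨1, by omega⟩, rfl⟩
  have hmod : 1 % (k+1) = 1 := Nat.mod_eq_of_lt (by omega)
  set W : Fin (n+1) → Fin (k+1) :=
    fun j => if (j:ℕ) = 0 then sF else if (j:ℕ) ≤ t then oneF else 0 with hWdef
  have hWzero : (rset W 0).card = r := by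
    have hset : rset W 0 =
        (Finset.univ : Finset (Fin (n+1))).filter (fun j : Fin (n+1) => t + 1 ≤ (j:ℕ)) := by
      ext j
      rw [mem_rset, Finset.mem_filter]
      simp only [hWdef, Finset.mem_univ, true_and]
      split_ifs <;> simp only [hsFv, honeFv, Fin.val_zero, eq_self_iff_true, true_iff, iff_true, false_iff, iff_false] <;> omega
    rw [hset, card_filter_val_ge (n+1) (t+1) (by omega)]
    omega
  -- ============ W ∈ A ============
  have hW : W ∈ A := by
    set P1 : Fin (n+1) → Fin (k+1) := fun j =>
      if (j:ℕ) = (jst:ℕ) then sF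
      else if (if (j:ℕ) < (jst:ℕ) then (j:ℕ) else (j:ℕ) - 1) < t then oneF else 0 with hP1def
    have hremP1 : Fin.removeNth jst P1 = muF k n t := by
      funext j
      rw [removeNth_apply]
      simp only [hP1def, muF]
      rcases Nat.lt_or_ge (j:ℕ) (jst:ℕ) with hc | hc
      · have hm : ((jst.succAbove j : Fin (n+1)) : ℕ) = (j:ℕ) := by
          rw [succAbove_val, if_pos hc]
        rw [hm]
        split_ifs <;>
          first
          | rfl
          | omega
          | (exfalso; omega)
          | (apply Fin.ext; simp only [hsFv, honeFv, Fin.val_mk, hmod]; try omega)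
      · have hm : ((jst.succAbove j : Fin (n+1)) : ℕ) = (j:ℕ) + 1 := by
          rw [succAbove_val, if_neg (by omega)]
        rw [hm]
        split_ifs <;>
          first
          | rfl
          | omega
          | (exfalso; omega)
          | (apply Fin.ext; simp only [hsFv, honeFv, Fin.val_mk, hmod]; try omega)
    have hP1 : P1 ∈ A := by
      apply mem_of_compressed hA hxsA jst
      · simp only [hP1def, if_pos rfl]
        exact Fin.ext (by rw [hsFv, hjs])
      · rw [hremP1]
        apply mu_min hk t (by omega)
        rw [rset_removeNth_card_of_ne _ _ _ (by rw [hjs]; omega), hxsr]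
        omega
    have hP1zero : (rset P1 0).card = r := by
      have h1 := rset_removeNth_card_of_ne jst P1 0
        (by simp only [hP1def, if_pos rfl, hsFv]; omega)
      rw [hremP1, muF_zero_card hk t (by omega)] at h1
      omega
    rcases Nat.eq_zero_or_pos (jst:ℕ) with hj0 | hj1
    · -- jst = 0 : W = P1
      have hWP : W = P1 := by
        funext j
        simp only [hWdef, hP1def, hj0]
        split_ifs <;> first | rfl | omega | (exfalso; omega)
      rw [hWP]; exact hP1
    · -- jst ≥ 1 : first build Q
      set Q : Fin (n+1) → Fin (k+1) :=
        fun j => if (j:ℕ) = 1 then sF else if (j:ℕ) ≤ t then oneF else 0 with hQdef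
      have hQzero : (rset Q 0).card = r := by
        have hset : rset Q 0 =
            (Finset.univ : Finset (Fin (n+1))).filter (fun j : Fin (n+1) => t + 1 ≤ (j:ℕ)) := by
          ext j
          rw [mem_rset, Finset.mem_filter]
          simp only [hQdef, Finset.mem_univ, true_and]
          split_ifs <;> simp only [hsFv, honeFv, Fin.val_zero, eq_self_iff_true, true_iff, iff_true, false_iff, iff_false] <;> omega
        rw [hset, card_filter_val_ge (n+1) (t+1) (by omega)]
        omega
      have hQ : Q ∈ A := by
        apply mem_of_compressed hA hP1 (0 : Fin (n+1))
        · have h1 : Q (0 : Fin (n+1)) = oneF := by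
            simp only [hQdef]
            rw [if_neg (by simp), if_pos (by simp)]
          have h2 : P1 (0 : Fin (n+1)) = oneF := by
            simp only [hP1def]
            rw [if_neg (by simp; omega), if_pos (by rw [if_pos (by simp only [Fin.val_zero]; omega)]; simp; omega)]
          rw [h1, h2]
        · rcases Nat.eq_or_lt_of_le hj1 with hj2 | hj2
          · -- jst = 1 : equality
            left
            funext j
            rw [removeNth_apply, removeNth_apply]
            have hm : (((0:Fin (n+1)).succAbove j : Fin (n+1)) : ℕ) = (j:ℕ) + 1 := by
              rw [succAbove_val, if_neg (by simp)]
            simp only [hQdef, hP1def, hm, ← hj2]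
            split_ifs <;> first | rfl | (exfalso; omega)
          · -- jst ≥ 2 : strict comparison at level s
            right
            apply plt_of_single_lt s (⟨0, by omega⟩ : Fin n) (⟨(jst:ℕ) - 1, by omega⟩ : Fin n)
            · rw [Fin.lt_def]; simp only [Fin.val_mk]; omega
            · rw [rset_removeNth_card_of_ne _ _ _ (by
                  simp only [hQdef, Fin.val_zero]
                  split_ifs <;> simp [hsFv, honeFv] <;> omega),
                rset_removeNth_card_of_ne _ _ _ (by
                  simp only [hP1def]
                  rw [if_neg (by simp only [Fin.val_zero]; omega), if_pos (by rw [if_pos (by simp only [Fin.val_zero]; omega)]; simp only [Fin.val_zero]; omega), honeFv]; omega),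
                hQzero, hP1zero]
            · apply rset_eq_singleton
              · rw [removeNth_apply]
                have hm : (((0:Fin (n+1)).succAbove ⟨0, by omega⟩ : Fin (n+1)) : ℕ) = 1 := by
                  rw [succAbove_val, if_neg (by simp)]
                simp only [hQdef, hm, if_true, ite_true, hsFv]
              · intro j hj
                rw [removeNth_apply] at hj
                have hm : (((0:Fin (n+1)).succAbove j : Fin (n+1)) : ℕ) = (j:ℕ) + 1 := by
                  rw [succAbove_val, if_neg (by simp)]
                simp only [hQdef, hm] at hj
                apply Fin.ext
                simp only [Fin.val_mk]
                split_ifs at hj <;> simp only [hsFv, honeFv, Fin.val_zero, eq_self_iff_true, true_iff, iff_true, false_iff, iff_false] at hj <;> omega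
            · apply rset_eq_singleton
              · rw [removeNth_apply]
                have hm : (((0:Fin (n+1)).succAbove ⟨(jst:ℕ)-1, by omega⟩ : Fin (n+1)) : ℕ)
                    = (jst:ℕ) := by
                  rw [succAbove_val, if_neg (by simp)]
                  simp only [Fin.val_mk]
                  omega
                simp only [hP1def, hm, if_true, ite_true, hsFv]
              · intro j hj
                rw [removeNth_apply] at hj
                have hm : (((0:Fin (n+1)).succAbove j : Fin (n+1)) : ℕ) = (j:ℕ) + 1 := by
                  rw [succAbove_val, if_neg (by simp)]
                simp only [hP1def, hm] at hj
                apply Fin.ext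
                simp only [Fin.val_mk]
                split_ifs at hj <;> simp only [hsFv, honeFv, Fin.val_zero, eq_self_iff_true, true_iff, iff_true, false_iff, iff_false] at hj <;> omega
            · intro v hv
              apply rset_empty_of_lt _ (v := s+1) _ v (by omega)
              intro j
              rw [removeNth_apply]
              simp only [hQdef]
              split_ifs <;> simp only [hsFv, honeFv, Fin.val_zero, eq_self_iff_true, true_iff, iff_true, false_iff, iff_false] <;> omega
            · intro v hv
              apply rset_empty_of_lt _ (v := s+1) _ v (by omega)
              intro j
              rw [removeNth_apply]
              simp only [hP1def]
              split_ifs <;> simp only [hsFv, honeFv, Fin.val_zero, eq_self_iff_true, true_iff, iff_true, false_iff, iff_false] <;> omega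
      -- now W from Q, removing the last coordinate
      set lastF : Fin (n+1) := ⟨n, by omega⟩ with hlastF
      have hlastv : (lastF : ℕ) = n := rfl
      apply mem_of_compressed hA hQ lastF
      · simp only [hWdef, hQdef, hlastv]
        split_ifs <;> first | rfl | (exfalso; omega)
      · right
        have hmlast : ∀ j : Fin n, ((lastF.succAbove j : Fin (n+1)) : ℕ) = (j:ℕ) := by
          intro j
          rw [succAbove_val, if_pos (by rw [hlastv]; exact j.isLt)]
        apply plt_of_single_lt s (⟨0, by omega⟩ : Fin n) (⟨1, by omega⟩ : Fin n)
        · rw [Fin.lt_def]; simp only [Fin.val_mk]; omega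
        · rw [rset_removeNth_card_of_eq _ _ _ (by
              simp only [hWdef, hlastv]
              split_ifs <;> simp only [hsFv, honeFv, Fin.val_zero, eq_self_iff_true, true_iff, iff_true, false_iff, iff_false] <;> omega),
            rset_removeNth_card_of_eq _ _ _ (by
              simp only [hQdef, hlastv]
              split_ifs <;> simp only [hsFv, honeFv, Fin.val_zero, eq_self_iff_true, true_iff, iff_true, false_iff, iff_false] <;> omega),
            hWzero, hQzero]
        · apply rset_eq_singleton
          · rw [removeNth_apply]
            have hm := hmlast ⟨0, by omega⟩
            simp only [Fin.val_mk] at hm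
            simp only [hWdef, hm, if_true, ite_true, hsFv]
          · intro j hj
            rw [removeNth_apply] at hj
            simp only [hWdef, hmlast j] at hj
            apply Fin.ext
            simp only [Fin.val_mk]
            split_ifs at hj <;> simp only [hsFv, honeFv, Fin.val_zero, eq_self_iff_true, true_iff, iff_true, false_iff, iff_false] at hj <;> omega
        · apply rset_eq_singleton
          · rw [removeNth_apply]
            have hm := hmlast ⟨1, by omega⟩
            simp only [Fin.val_mk] at hm
            simp only [hQdef, hm, if_true, ite_true, hsFv]
          · intro j hj
            rw [removeNth_apply] at hj
            simp only [hQdef, hmlast j] at hj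
            apply Fin.ext
            simp only [Fin.val_mk]
            split_ifs at hj <;> simp only [hsFv, honeFv, Fin.val_zero, eq_self_iff_true, true_iff, iff_true, false_iff, iff_false] at hj <;> omega
        · intro v hv
          apply rset_empty_of_lt _ (v := s+1) _ v (by omega)
          intro j
          rw [removeNth_apply]
          simp only [hWdef]
          split_ifs <;> simp only [hsFv, honeFv, Fin.val_zero, eq_self_iff_true, true_iff, iff_true, false_iff, iff_false] <;> omega
        · intro v hv
          apply rset_empty_of_lt _ (v := s+1) _ v (by omega)
          intro j
          rw [removeNth_apply]
          simp only [hQdef]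
          split_ifs <;> simp only [hsFv, honeFv, Fin.val_zero, eq_self_iff_true, true_iff, iff_true, false_iff, iff_false] <;> omega
  -- ============ final step ============
  subst hwx
  have hwvals : ∀ j, ((Function.update x i 0 j : Fin (k+1)) : ℕ) < s := by
    intro j
    rw [Function.update_apply]
    split_ifs
    · simp only [Fin.val_zero]; omega
    · exact hbox j
  have hwZ : rset (Function.update x i 0) 0 = insert i (rset x 0) := by
    ext j
    rw [mem_rset, Finset.mem_insert, mem_rset, Function.update_apply]
    by_cases h : j = i
    · simp [h]
    · simp [h]
  have hwZcard : (rset (Function.update x i 0) 0).card = r + 1 := by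
    rw [hwZ, Finset.card_insert_of_notMem (by rw [mem_rset]; omega), hbr]
  by_cases hcase : ∃ j ∈ rset (Function.update x i 0) 0, 1 ≤ (j:ℕ) ∧ (j:ℕ) ≤ t
  · -- Case A
    obtain ⟨jz, hjzZ, hjz1, hjzt⟩ := hcase
    have hwjz : Function.update x i 0 jz = 0 := by
      rw [mem_rset] at hjzZ
      exact Fin.ext (by simpa using hjzZ)
    have hjzZ' : jz ∈ rset (Function.update x i 0) 0 := by
      rw [mem_rset, hwjz]; rfl
    set y : Fin (n+1) → Fin (k+1) := Function.update (Function.update x i 0) jz oneF with hydef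
    have hy : y ∈ A := by
      apply mem_of_compressed hA hW jz
      · simp only [hydef, Function.update_self, hWdef]
        split_ifs <;> first | rfl | (exfalso; omega)
      · right
        apply plt_of_no_high s
        · rw [rset_removeNth_card_of_ne _ _ _ (by
              simp only [hydef, Function.update_self, honeFv]; omega),
            rset_removeNth_card_of_ne _ _ _ (by
              simp only [hWdef]
              split_ifs <;> simp only [hsFv, honeFv, Fin.val_zero, eq_self_iff_true, true_iff, iff_true, false_iff, iff_false] <;> omega),
            hWzero]
          simp only [hydef]
          rw [rset_update_ne_zero _ _ _ (by rw [honeFv]; omega),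
            Finset.card_erase_of_mem hjzZ', hwZcard]
          omega
        · apply rset_empty_of_lt
          intro j
          rw [removeNth_apply]
          simp only [hydef, Function.update_apply]
          split_ifs <;>
            first
            | (rw [honeFv]; omega)
            | (simp only [Fin.val_zero]; omega)
            | exact hbox _
        · refine ⟨⟨0, by omega⟩, ?_⟩
          rw [mem_rset, removeNth_apply]
          have hm : ((jz.succAbove ⟨0, by omega⟩ : Fin (n+1)) : ℕ) = 0 := by
            rw [succAbove_val, if_pos (by simp only [Fin.val_mk]; omega)]
          simp only [hWdef, hm, if_true, ite_true, hsFv]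
        · intro v hv
          apply rset_empty_of_lt _ (v := s+1) _ v (by omega)
          intro j
          rw [removeNth_apply]
          simp only [hWdef]
          split_ifs <;> simp only [hsFv, honeFv, Fin.val_zero, eq_self_iff_true, true_iff, iff_true, false_iff, iff_false] <;> omega
    unfold dShadow
    rw [Finset.mem_biUnion]
    refine ⟨y, hy, ?_⟩
    rw [Finset.mem_image]
    refine ⟨jz, Finset.mem_filter.2 ⟨Finset.mem_univ _, by
      simp only [hydef, Function.update_self]
      intro h
      have := congrArg Fin.val h
      rw [honeFv] at this
      simp at this⟩, ?_⟩
    simp only [hydef]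
    rw [Function.update_idem]
    have hfin := Function.update_eq_self jz (Function.update x i 0)
    rw [hwjz] at hfin
    exact hfin
  · -- Case B
    push_neg at hcase
    have hZsub : rset (Function.update x i 0) 0 ⊆
        insert (0 : Fin (n+1))
          ((Finset.univ : Finset (Fin (n+1))).filter (fun j : Fin (n+1) => t + 1 ≤ (j:ℕ))) := by
      intro j hj
      rw [Finset.mem_insert, Finset.mem_filter]
      have hc := hcase j hj
      rcases Nat.eq_zero_or_pos (j:ℕ) with h0 | h0
      · left; exact Fin.ext (by simpa using h0)
      · right
        exact ⟨Finset.mem_univ _, by have := hc h0; omega⟩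
    have hRcard : (insert (0 : Fin (n+1))
        ((Finset.univ : Finset (Fin (n+1))).filter (fun j : Fin (n+1) => t + 1 ≤ (j:ℕ)))).card
        = r + 1 := by
      rw [Finset.card_insert_of_notMem (by
        rw [Finset.mem_filter]
        simp only [Finset.mem_univ, true_and, Fin.val_zero]
        omega), card_filter_val_ge (n+1) (t+1) (by omega)]
      omega
    have hZeq : rset (Function.update x i 0) 0 =
        insert (0 : Fin (n+1))
          ((Finset.univ : Finset (Fin (n+1))).filter (fun j : Fin (n+1) => t + 1 ≤ (j:ℕ))) := by
      apply Finset.eq_of_subset_of_card_le hZsub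
      rw [hRcard, hwZcard]
    set lastF : Fin (n+1) := ⟨n, by omega⟩ with hlastF
    have hlastv : (lastF : ℕ) = n := rfl
    have hlastZ : lastF ∈ rset (Function.update x i 0) 0 := by
      rw [hZeq, Finset.mem_insert, Finset.mem_filter]
      right
      exact ⟨Finset.mem_univ _, by rw [hlastv]; omega⟩
    have h0Z : (0 : Fin (n+1)) ∈ rset (Function.update x i 0) 0 := by
      rw [hZeq]; exact Finset.mem_insert_self _ _
    have hw0 : Function.update x i 0 (0 : Fin (n+1)) = 0 := by
      rw [mem_rset] at h0Z
      exact Fin.ext (by simpa using h0Z)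
    have hwlast : Function.update x i 0 lastF = 0 := by
      rw [mem_rset] at hlastZ
      exact Fin.ext (by simpa using hlastZ)
    have hlne : lastF ≠ (0 : Fin (n+1)) := by
      intro h
      have := congrArg Fin.val h
      rw [hlastv] at this
      simp at this
      omega
    set y : Fin (n+1) → Fin (k+1) :=
      Function.update (Function.update x i 0) (0 : Fin (n+1)) oneF with hydef
    have hylastv : y lastF = 0 := by
      simp only [hydef]
      rw [Function.update_of_ne hlne, hwlast]
    have hy : y ∈ A := by
      apply mem_of_compressed hA hW lastF
      · rw [hylastv]
        simp only [hWdef, hlastv]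
        split_ifs <;> first | rfl | (exfalso; omega)
      · right
        apply plt_of_no_high s
        · rw [rset_removeNth_card_of_eq _ _ _ (by rw [hylastv]; rfl),
            rset_removeNth_card_of_eq _ _ _ (by
              simp only [hWdef, hlastv]
              split_ifs <;> simp only [hsFv, honeFv, Fin.val_zero, eq_self_iff_true, true_iff, iff_true, false_iff, iff_false] <;> omega),
            hWzero]
          simp only [hydef]
          rw [rset_update_ne_zero _ _ _ (by rw [honeFv]; omega),
            Finset.card_erase_of_mem h0Z, hwZcard]
          omega
        · apply rset_empty_of_lt
          intro j
          rw [removeNth_apply]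
          simp only [hydef, Function.update_apply]
          split_ifs <;>
            first
            | (rw [honeFv]; omega)
            | (simp only [Fin.val_zero]; omega)
            | exact hbox _
        · refine ⟨⟨0, by omega⟩, ?_⟩
          rw [mem_rset, removeNth_apply]
          have hm : ((lastF.succAbove ⟨0, by omega⟩ : Fin (n+1)) : ℕ) = 0 := by
            rw [succAbove_val, if_pos (by simp only [Fin.val_mk, hlastv]; omega)]
          simp only [hWdef, hm, if_true, ite_true, hsFv]
        · intro v hv
          apply rset_empty_of_lt _ (v := s+1) _ v (by omega)
          intro j
          rw [removeNth_apply]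
          simp only [hWdef]
          split_ifs <;> simp only [hsFv, honeFv, Fin.val_zero, eq_self_iff_true, true_iff, iff_true, false_iff, iff_false] <;> omega
    unfold dShadow
    rw [Finset.mem_biUnion]
    refine ⟨y, hy, ?_⟩
    rw [Finset.mem_image]
    refine ⟨(0 : Fin (n+1)), Finset.mem_filter.2 ⟨Finset.mem_univ _, by
      simp only [hydef, Function.update_self]
      intro h
      have := congrArg Fin.val h
      rw [honeFv] at this
      simp at this⟩, ?_⟩
    simp only [hydef]
    rw [Function.update_idem]
    have hfin := Function.update_eq_self (0 : Fin (n+1)) (Function.update x i 0)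
    rw [hw0] at hfin
    exact hfin
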